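/- For every N ∈ ℕ and all u, v, z ∈ ℂ with u ≠ v, u ≠ z and v ≠ z, the Yang R-matrix satisfies the quantum Yang–Baxter equation R₁₂(u−v) · R₁₃(u−z) · R₂₃(v−z) = R₂₃(v−z) · R₁₃(u−z) · R₁₂(u−v) as linear operators on ℂ^N ⊗ ℂ^N ⊗ ℂ^N. -/

import Mathlib

set_option maxRecDepth 4000

noncomputable section

open Matrix

/-- The permutation operator `P = Σ e_{ij} ⊗ e_{ji}` on `ℂ^N ⊗ ℂ^N`. -/
def permP (N : ℕ) : Matrix (Fin N × Fin N) (Fin N × Fin N) ℂ :=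
  fun x y => if x.1 = y.2 ∧ x.2 = y.1 then 1 else 0

/-- The Yang R-matrix `R(u) = I - u⁻¹ P`. -/
def yangR (N : ℕ) (u : ℂ) : Matrix (Fin N × Fin N) (Fin N × Fin N) ℂ :=
  1 - u⁻¹ • permP N

/-- A matrix on `ℂ^N ⊗ ℂ^N` acting on factors 1 and 2 of `ℂ^N ⊗ ℂ^N ⊗ ℂ^N`. -/
def emb12 {N : ℕ} (M : Matrix (Fin N × Fin N) (Fin N × Fin N) ℂ) :
    Matrix (Fin N × Fin N × Fin N) (Fin N × Fin N × Fin N) ℂ :=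
  fun x y => M (x.1, x.2.1) (y.1, y.2.1) * (if x.2.2 = y.2.2 then 1 else 0)

/-- A matrix on `ℂ^N ⊗ ℂ^N` acting on factors 1 and 3 of `ℂ^N ⊗ ℂ^N ⊗ ℂ^N`. -/
def emb13 {N : ℕ} (M : Matrix (Fin N × Fin N) (Fin N × Fin N) ℂ) :
    Matrix (Fin N × Fin N × Fin N) (Fin N × Fin N × Fin N) ℂ :=
  fun x y => M (x.1, x.2.2) (y.1, y.2.2) * (if x.2.1 = y.2.1 then 1 else 0)

/-- A matrix on `ℂ^N ⊗ ℂ^N` acting on factors 2 and 3 of `ℂ^N ⊗ ℂ^N ⊗ ℂ^N`. -/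
def emb23 {N : ℕ} (M : Matrix (Fin N × Fin N) (Fin N × Fin N) ℂ) :
    Matrix (Fin N × Fin N × Fin N) (Fin N × Fin N × Fin N) ℂ :=
  fun x y => M (x.2.1, x.2.2) (y.2.1, y.2.2) * (if x.1 = y.1 then 1 else 0)

/-- Auxiliary: matrix of a map `σ`, `pmat σ x y = [x = σ y]`. -/
def pmat {I : Type*} [Fintype I] [DecidableEq I] (σ : I → I) : Matrix I I ℂ :=
  fun x y => if x = σ y then 1 else 0

lemma pmat_mul {I : Type*} [Fintype I] [DecidableEq I] (σ τ : I → I) :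
    pmat σ * pmat τ = pmat (σ ∘ τ) := by
  ext x y
  simp [pmat, mul_apply, ite_mul, Finset.sum_ite_eq']

abbrev T (N : ℕ) := Fin N × Fin N × Fin N

def s12 (N : ℕ) : T N → T N := fun x => (x.2.1, x.1, x.2.2)
def s13 (N : ℕ) : T N → T N := fun x => (x.2.2, x.2.1, x.1)
def s23 (N : ℕ) : T N → T N := fun x => (x.1, x.2.2, x.2.1)
def c1 (N : ℕ) : T N → T N := fun x => (x.2.1, x.2.2, x.1)
def c2 (N : ℕ) : T N → T N := fun x => (x.2.2, x.1, x.2.1)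

lemma emb12_yang (N : ℕ) (t : ℂ) :
    emb12 (yangR N t) = 1 - t⁻¹ • pmat (s12 N) := by
  ext x y
  simp only [emb12, yangR, pmat, s12, Matrix.sub_apply, Matrix.smul_apply, one_apply, permP, smul_eq_mul,
    Prod.ext_iff, Prod.mk.injEq]
  rcases x with ⟨a, b, c⟩; rcases y with ⟨d, e, f⟩
  dsimp only
  split_ifs <;> (first | (exfalso; tauto) | ring)

lemma emb13_yang (N : ℕ) (t : ℂ) :
    emb13 (yangR N t) = 1 - t⁻¹ • pmat (s13 N) := by
  ext x y
  simp only [emb13, yangR, pmat, s13, Matrix.sub_apply, Matrix.smul_apply, one_apply, permP, smul_eq_mul,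
    Prod.ext_iff, Prod.mk.injEq]
  rcases x with ⟨a, b, c⟩; rcases y with ⟨d, e, f⟩
  dsimp only
  split_ifs <;> (first | (exfalso; tauto) | ring)

lemma emb23_yang (N : ℕ) (t : ℂ) :
    emb23 (yangR N t) = 1 - t⁻¹ • pmat (s23 N) := by
  ext x y
  simp only [emb23, yangR, pmat, s23, Matrix.sub_apply, Matrix.smul_apply, one_apply, permP, smul_eq_mul,
    Prod.ext_iff, Prod.mk.injEq]
  rcases x with ⟨a, b, c⟩; rcases y with ⟨d, e, f⟩
  dsimp only
  split_ifs <;> (first | (exfalso; tauto) | ring)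

lemma comp1213 (N : ℕ) : s12 N ∘ s13 N = c1 N := rfl
lemma comp1323 (N : ℕ) : s13 N ∘ s23 N = c1 N := rfl
lemma comp2312 (N : ℕ) : s23 N ∘ s12 N = c1 N := rfl
lemma comp1312 (N : ℕ) : s13 N ∘ s12 N = c2 N := rfl
lemma comp1223 (N : ℕ) : s12 N ∘ s23 N = c2 N := rfl
lemma comp2313 (N : ℕ) : s23 N ∘ s13 N = c2 N := rfl
lemma comp12c1 (N : ℕ) : s12 N ∘ c1 N = s13 N := rfl
lemma comp23c2 (N : ℕ) : s23 N ∘ c2 N = s13 N := rfl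
lemma compc123 (N : ℕ) : c1 N ∘ s23 N = s13 N := rfl
lemma compc212 (N : ℕ) : c2 N ∘ s12 N = s13 N := rfl

theorem yang_baxter_equation (N : ℕ) (u v z : ℂ)
    (huv : u ≠ v) (huz : u ≠ z) (hvz : v ≠ z) :
    emb12 (yangR N (u - v)) * emb13 (yangR N (u - z)) * emb23 (yangR N (v - z)) =
      emb23 (yangR N (v - z)) * emb13 (yangR N (u - z)) * emb12 (yangR N (u - v)) := by
  have huv' : u - v ≠ 0 := sub_ne_zero.mpr huv
  have huz' : u - z ≠ 0 := sub_ne_zero.mpr huz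
  have hvz' : v - z ≠ 0 := sub_ne_zero.mpr hvz
  have h : (u - v)⁻¹ * (u - z)⁻¹ + (u - z)⁻¹ * (v - z)⁻¹ = (u - v)⁻¹ * (v - z)⁻¹ := by
    field_simp
    ring
  rw [emb12_yang, emb13_yang, emb23_yang]
  simp only [mul_sub, sub_mul, one_mul, mul_one, Matrix.smul_mul, Matrix.mul_smul,
    pmat_mul, comp1213, comp1323, comp2312, comp1312, comp1223, comp2313,
    compc123, compc212, comp12c1, comp23c2]
  generalize (u - v)⁻¹ = a at h ⊢
  generalize (u - z)⁻¹ = b at h ⊢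
  generalize (v - z)⁻¹ = c at h ⊢
  match_scalars <;>
    first
    | linear_combination h
    | linear_combination -h
    | ring
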